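/- Let μ > 0 and let r ≥ 1 and t ≥ 0 be integers. On a probability space, let S and X_{i,j} (for i = 1,…,t and j = 1,…,r) be random variables such that the whole family {S} ∪ {X_{i,j}} is mutually independent and each variable is exponentially distributed with rate μ. Define T = min( S, max_{j≤r} X_{1,j}, …, max_{j≤r} X_{t,j} ). Then the expectation of T equals E[T] = (1/(μ r)) · B(t+1, 1/r), where B is the real Beta function. -/

import Mathlib

open MeasureTheory ProbabilityTheory

/-- The real Beta function `B(x,y) = ∫₀¹ v^(x-1) (1-v)^(y-1) dv`. -/
noncomputable def betaFn (x y : ℝ) : ℝ :=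
  ∫ v in (0:ℝ)..1, v ^ (x - 1) * (1 - v) ^ (y - 1)

section Aux

open Set Filter intervalIntegral Finset

lemma betaFn_nat_eval (t : ℕ) {y : ℝ} (hy : 0 < y) :
    betaFn ((t : ℝ) + 1) y
      = ∑ k ∈ range (t + 1), (-1 : ℝ) ^ k * (t.choose k) * (1 / ((k : ℝ) + y)) := by
  have h1 : betaFn ((t : ℝ) + 1) y = ∫ v in (0:ℝ)..1, v ^ (t : ℝ) * (1 - v) ^ (y - 1) := by
    unfold betaFn; norm_num
  have h2 : (∫ v in (0:ℝ)..1, v ^ (t : ℝ) * (1 - v) ^ (y - 1))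
      = ∫ u in (0:ℝ)..1, (1 - u) ^ (t : ℝ) * u ^ (y - 1) := by
    have := intervalIntegral.integral_comp_sub_left (a := 0) (b := 1)
      (fun u : ℝ => (1 - u) ^ (t : ℝ) * u ^ (y - 1)) 1
    simp only [sub_sub_cancel, sub_zero, sub_self] at this
    rw [← this]
  have h3 : (∫ u in (0:ℝ)..1, (1 - u) ^ (t : ℝ) * u ^ (y - 1))
      = ∫ u in (0:ℝ)..1,
          ∑ k ∈ range (t + 1), ((-1 : ℝ) ^ k * (t.choose k)) * u ^ ((k : ℝ) + y - 1) := by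
    rw [integral_of_le zero_le_one, integral_of_le zero_le_one]
    apply setIntegral_congr_fun measurableSet_Ioc
    intro u hu
    have hu0 : 0 < u := hu.1
    simp only []
    rw [Real.rpow_natCast, sub_eq_add_neg, add_comm, add_pow]
    rw [Finset.sum_mul]
    refine Finset.sum_congr rfl fun k hk => ?_
    have : u ^ ((k : ℝ) + y - 1) = u ^ k * u ^ (y - 1) := by
      rw [← Real.rpow_natCast u k, ← Real.rpow_add hu0]
      ring_nf
    rw [this]
    ring
  have h4 : ∀ k ∈ range (t + 1),
      IntervalIntegrable (fun u : ℝ => ((-1 : ℝ) ^ k * (t.choose k)) * u ^ ((k : ℝ) + y - 1))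
        volume 0 1 := by
    intro k _
    exact (intervalIntegral.intervalIntegrable_rpow'
      (by linarith [Nat.cast_nonneg (α := ℝ) k])).const_mul _
  rw [h1, h2, h3, intervalIntegral.integral_finset_sum h4]
  refine Finset.sum_congr rfl fun k hk => ?_
  rw [intervalIntegral.integral_const_mul,
    integral_rpow (Or.inl (by linarith [Nat.cast_nonneg (α := ℝ) k]))]
  have hky : (0:ℝ) < (k : ℝ) + y := by positivity
  rw [sub_add_cancel]
  rw [Real.one_rpow, Real.zero_rpow hky.ne']
  field_simp
  simp

lemma cont_term (μ : ℝ) (m : ℕ) :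
    Continuous (fun s : ℝ => Real.exp (-(μ*s)) * (1 - Real.exp (-(μ*s)))^m) := by
  continuity

lemma integrableOn_term (μ : ℝ) (hμ : 0 < μ) (m : ℕ) :
    IntegrableOn (fun s : ℝ => Real.exp (-(μ*s)) * (1 - Real.exp (-(μ*s)))^m)
      (Ioi (0:ℝ)) volume := by
  apply Integrable.mono (exp_neg_integrableOn_Ioi 0 hμ)
    ((cont_term μ m).aestronglyMeasurable.restrict)
  filter_upwards [ae_restrict_mem measurableSet_Ioi] with s hs
  have h1 : Real.exp (-(μ*s)) ≤ 1 := by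
    rw [Real.exp_le_one_iff]; nlinarith [mem_Ioi.mp hs]
  have h0 : 0 < Real.exp (-(μ*s)) := Real.exp_pos _
  rw [Real.norm_eq_abs, Real.norm_eq_abs,
    abs_of_nonneg (mul_nonneg h0.le (pow_nonneg (by linarith) m)), abs_of_pos (Real.exp_pos _)]
  have h2 : (1 - Real.exp (-(μ*s)))^m ≤ 1 := by
    apply pow_le_one₀ (by linarith) (by linarith)
  have : Real.exp (-μ * s) = Real.exp (-(μ*s)) := by ring_nf
  rw [this]
  nlinarith [pow_nonneg (by linarith : (0:ℝ) ≤ 1 - Real.exp (-(μ*s))) m]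

lemma term_integral (μ : ℝ) (hμ : 0 < μ) (m : ℕ) :
    ∫ s in Ioi (0:ℝ), Real.exp (-(μ*s)) * (1 - Real.exp (-(μ*s)))^m
      = 1/(μ*(m+1)) := by
  have hm : (0:ℝ) < μ * (m+1) := by positivity
  have key := MeasureTheory.integral_Ioi_of_hasDerivAt_of_tendsto
    (f := fun s : ℝ => (1 - Real.exp (-(μ*s)))^(m+1) / (μ*(m+1)))
    (f' := fun s : ℝ => Real.exp (-(μ*s)) * (1 - Real.exp (-(μ*s)))^m)
    (a := 0) (m := 1/(μ*(m+1))) ?_ ?_ (integrableOn_term μ hμ m) ?_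
  · rw [key]; simp
  · apply Continuous.continuousWithinAt
    continuity
  · intro x _
    have h1 : HasDerivAt (fun s : ℝ => 1 - Real.exp (-(μ*s))) (μ * Real.exp (-(μ*x))) x := by
      have : HasDerivAt (fun s : ℝ => Real.exp (-(μ*s))) (Real.exp (-(μ*x)) * (-μ)) x := by
        have harg : HasDerivAt (fun s : ℝ => -(μ*s)) (-μ) x := by
          exact (((hasDerivAt_id x).const_mul μ).neg).congr_deriv (by simp)
        exact harg.exp
      exact ((hasDerivAt_const x (1:ℝ)).sub this).congr_deriv (by ring)
    have h2 := (h1.pow (m+1)).div_const (μ*(m+1))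
    refine h2.congr_deriv ?_
    rw [Nat.add_sub_cancel, div_eq_iff (by positivity)]; push_cast
    ring
  · have h1 : Tendsto (fun s : ℝ => Real.exp (-(μ*s))) atTop (nhds 0) := by
      apply Real.tendsto_exp_comp_nhds_zero.mpr
      exact Filter.tendsto_neg_atBot_iff.mpr (Filter.Tendsto.const_mul_atTop hμ tendsto_id)
    have h2 : Tendsto (fun s : ℝ => (1 - Real.exp (-(μ*s)))^(m+1) / (μ*(m+1))) atTop
        (nhds ((1 - 0)^(m+1) / (μ*(m+1)))) := by
      exact (((tendsto_const_nhds.sub h1).pow (m+1)).div_const _)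
    simpa using h2

lemma exp_tail_le {Ω : Type*} [MeasurableSpace Ω] (Pr : Measure Ω) [IsProbabilityMeasure Pr]
    {μ : ℝ} (hμ : 0 < μ) {W : Ω → ℝ} (hWm : Measurable W) (hW : Pr.map W = expMeasure μ)
    {s : ℝ} (hs : 0 ≤ s) :
    Pr (W ⁻¹' (Set.Iic s)) = ENNReal.ofReal (1 - Real.exp (-(μ * s))) := by
  have h1 : Pr (W ⁻¹' (Set.Iic s)) = (Pr.map W) (Set.Iic s) :=
    (Measure.map_apply hWm measurableSet_Iic).symm
  have h2 : expMeasure μ (Set.Iic s) = ∫⁻ y in Set.Iic s, exponentialPDF μ y := by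
    rw [expMeasure, gammaMeasure, withDensity_apply _ measurableSet_Iic]
    rfl
  rw [h1, hW, h2, lintegral_exponentialPDF_eq_antiDeriv hμ, if_pos hs]

lemma exp_tail_gt {Ω : Type*} [MeasurableSpace Ω] (Pr : Measure Ω) [IsProbabilityMeasure Pr]
    {μ : ℝ} (hμ : 0 < μ) {W : Ω → ℝ} (hWm : Measurable W) (hW : Pr.map W = expMeasure μ)
    {s : ℝ} (hs : 0 ≤ s) :
    Pr (W ⁻¹' (Set.Ioi s)) = ENNReal.ofReal (Real.exp (-(μ * s))) := by
  have hc : W ⁻¹' (Set.Ioi s) = (W ⁻¹' (Set.Iic s))ᶜ := by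
    ext ω; simp [not_le]
  have he1 : Real.exp (-(μ * s)) ≤ 1 := by
    rw [Real.exp_le_one_iff]; nlinarith
  rw [hc, prob_compl_eq_one_sub (hWm measurableSet_Iic), exp_tail_le Pr hμ hWm hW hs,
    ← ENNReal.ofReal_one, ← ENNReal.ofReal_sub _ (by linarith)]
  norm_num

lemma exp_ae_nonneg {Ω : Type*} [MeasurableSpace Ω] (Pr : Measure Ω) [IsProbabilityMeasure Pr]
    {μ : ℝ} {W : Ω → ℝ} (hWm : Measurable W) (hW : Pr.map W = expMeasure μ) :
    ∀ᵐ ω ∂Pr, 0 ≤ W ω := by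
  have h0 : Pr (W ⁻¹' (Set.Iio 0)) = 0 := by
    rw [← Measure.map_apply hWm measurableSet_Iio, hW]
    rw [expMeasure, gammaMeasure, withDensity_apply _ measurableSet_Iio]
    exact lintegral_exponentialPDF_of_nonpos (le_refl (0:ℝ))
  rw [ae_iff]
  convert h0 using 2
  ext ω
  simp [not_le]

lemma meas_inf' {ι : Type*} {Ω : Type*} [MeasurableSpace Ω] (f : ι → Ω → ℝ)
    (hf : ∀ i, Measurable (f i)) (s : Finset ι) (hs : s.Nonempty) :
    Measurable fun ω => s.inf' hs fun i => f i ω := by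
  induction hs using Finset.Nonempty.cons_induction with
  | singleton a => simpa only [Finset.inf'_singleton] using hf a
  | cons a s ha hs ih => simp only [Finset.inf'_cons (H := hs)]; exact (hf a).min ih

lemma meas_sup' {ι : Type*} {Ω : Type*} [MeasurableSpace Ω] (f : ι → Ω → ℝ)
    (hf : ∀ i, Measurable (f i)) (s : Finset ι) (hs : s.Nonempty) :
    Measurable fun ω => s.sup' hs fun i => f i ω := by
  induction hs using Finset.Nonempty.cons_induction with
  | singleton a => simpa only [Finset.sup'_singleton] using hf a
  | cons a s ha hs ih => simp only [Finset.sup'_cons (H := hs)]; exact (hf a).max ih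

lemma tail_prob {Ω : Type*} [MeasurableSpace Ω] (Pr : Measure Ω) [IsProbabilityMeasure Pr]
    {μ : ℝ} (hμ : 0 < μ) (r t : ℕ)
    (S : Ω → ℝ) (X : Fin t → Fin r → Ω → ℝ)
    (hSm : Measurable S) (hXm : ∀ i j, Measurable (X i j))
    (hindep : iIndepFun
      (fun o : Option (Fin t × Fin r) => o.elim S (fun p => X p.1 p.2)) Pr)
    (hS : Pr.map S = expMeasure μ)
    (hX : ∀ i j, Pr.map (X i j) = expMeasure μ)
    {s : ℝ} (hs : 0 ≤ s) :
    Pr (S ⁻¹' (Set.Ioi s) ∩ ⋂ i : Fin t, ⋃ j : Fin r, X i j ⁻¹' (Set.Ioi s))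
      = ENNReal.ofReal (Real.exp (-(μ * s)) *
          (1 - (1 - Real.exp (-(μ * s)))^r)^t) := by
  set e := Real.exp (-(μ * s)) with he
  have he0 : 0 < e := Real.exp_pos _
  have he1 : e ≤ 1 := by rw [he, Real.exp_le_one_iff]; nlinarith
  have hp0 : 0 ≤ 1 - e := by linarith
  have hpr1 : (1 - e)^r ≤ 1 := pow_le_one₀ hp0 (by linarith)
  set m : Option (Fin t × Fin r) → MeasurableSpace Ω :=
    fun o => MeasurableSpace.comap (o.elim S fun p => X p.1 p.2) inferInstance with hm
  have hle : ∀ o, m o ≤ ‹MeasurableSpace Ω› := by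
    rintro (_ | p)
    · exact hSm.comap_le
    · exact (hXm p.1 p.2).comap_le
  have hiI : iIndep m Pr := hindep.iIndep
  set B : Fin t → Set Ω := fun i => ⋃ j, X i j ⁻¹' (Set.Ioi s) with hB
  have hmem : ∀ (i : Fin t) (j : Fin r),
      MeasurableSet[m (some (i, j))] (X i j ⁻¹' (Set.Ioi s)) :=
    fun i j => ⟨Set.Ioi s, measurableSet_Ioi, rfl⟩
  have hmemS : MeasurableSet[m none] (S ⁻¹' (Set.Ioi s)) :=
    ⟨Set.Ioi s, measurableSet_Ioi, rfl⟩
  have hBval : ∀ i, Pr (B i) = ENNReal.ofReal (1 - (1 - e)^r) := by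
    intro i
    have hBc : (B i)ᶜ = ⋂ j, X i j ⁻¹' (Set.Iic s) := by
      rw [hB]
      simp only [Set.compl_iUnion, ← Set.preimage_compl, Set.compl_Ioi]
    have hinter : Pr (⋂ j, X i j ⁻¹' (Set.Iic s)) = ENNReal.ofReal ((1 - e)^r) := by
      have hprod := hindep.meas_biInter (S := Finset.univ.image (fun j : Fin r => some (i, j)))
        (s := fun o => o.elim Set.univ (fun p => X p.1 p.2 ⁻¹' (Set.Iic s))) ?_
      · have hinj : Function.Injective
            (fun j : Fin r => (some (i, j) : Option (Fin t × Fin r))) := by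
          intro a b hab; simpa using hab
        rw [Finset.set_biInter_finset_image] at hprod
        rw [Finset.prod_image (fun a _ b _ h => hinj h)] at hprod
        simp only [Option.elim] at hprod
        rw [show (⋂ j, X i j ⁻¹' (Set.Iic s)) = ⋂ j ∈ Finset.univ, X i j ⁻¹' (Set.Iic s) by simp]
        rw [hprod]
        have hv : ∀ j : Fin r, Pr (X i j ⁻¹' (Set.Iic s)) = ENNReal.ofReal (1 - e) :=
          fun j => exp_tail_le Pr hμ (hXm i j) (hX i j) hs
        rw [Finset.prod_congr rfl (fun j _ => hv j)]
        rw [Finset.prod_const, Finset.card_univ, Fintype.card_fin, ENNReal.ofReal_pow hp0]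
      · rintro o ho
        simp only [Finset.mem_image] at ho
        obtain ⟨j, -, rfl⟩ := ho
        exact ⟨Set.Iic s, measurableSet_Iic, rfl⟩
    have hBm : MeasurableSet (⋂ j, X i j ⁻¹' (Set.Iic s)) :=
      MeasurableSet.iInter fun j => (hXm i j) measurableSet_Iic
    have hBmeas : MeasurableSet (B i) := MeasurableSet.iUnion fun j => (hXm i j) measurableSet_Ioi
    have hcompl : Pr (B i) = 1 - Pr ((B i)ᶜ) := by
      rw [prob_compl_eq_one_sub hBmeas, ENNReal.sub_sub_cancel ENNReal.one_ne_top prob_le_one]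
    rw [hcompl, hBc, hinter, ← ENNReal.ofReal_one, ← ENNReal.ofReal_sub _ (pow_nonneg hp0 r)]
  have key : ∀ F : Finset (Fin t),
      Pr (S ⁻¹' (Set.Ioi s) ∩ ⋂ i ∈ F, B i)
        = Pr (S ⁻¹' (Set.Ioi s)) * ∏ i ∈ F, Pr (B i) := by
    intro F
    induction F using Finset.induction with
    | empty => simp
    | @insert i F hiF ih =>
      have hdisj : Disjoint (Set.range fun j : Fin r => (some (i, j) : Option (Fin t × Fin r)))
          ({none} ∪ {o : Option (Fin t × Fin r) | ∃ p, o = some p ∧ p.1 ≠ i}) := by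
        rw [Set.disjoint_left]
        rintro o ⟨j, rfl⟩ (h | ⟨p, hp, hne⟩)
        · simp at h
        · simp only [Option.some.injEq] at hp
          exact hne (by rw [← hp])
      have hidep := indep_iSup_of_disjoint hle hiI hdisj
      have hMB : MeasurableSet[⨆ o ∈ (Set.range fun j : Fin r =>
          (some (i, j) : Option (Fin t × Fin r))), m o] (B i) := by
        apply MeasurableSet.iUnion
        intro j
        have hmemb : (some (i, j) : Option (Fin t × Fin r)) ∈
            Set.range fun j : Fin r => (some (i, j) : Option (Fin t × Fin r)) := ⟨j, rfl⟩
        exact le_biSup m hmemb _ (hmem i j)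
      have hME : MeasurableSet[⨆ o ∈ ({none} ∪
          {o : Option (Fin t × Fin r) | ∃ p, o = some p ∧ p.1 ≠ i}), m o]
          (S ⁻¹' (Set.Ioi s) ∩ ⋂ i' ∈ F, B i') := by
        apply MeasurableSet.inter
        · have hmemb : (none : Option (Fin t × Fin r)) ∈ ({none} ∪
              {o : Option (Fin t × Fin r) | ∃ p, o = some p ∧ p.1 ≠ i}) := Or.inl rfl
          exact le_biSup m hmemb _ hmemS
        · apply MeasurableSet.biInter (Finset.countable_toSet F)
          intro i' hi'
          apply MeasurableSet.iUnion
          intro j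
          have hne : i' ≠ i := fun hcontra => hiF (hcontra ▸ hi')
          have hmemb : (some (i', j) : Option (Fin t × Fin r)) ∈ ({none} ∪
              {o : Option (Fin t × Fin r) | ∃ p, o = some p ∧ p.1 ≠ i}) :=
            Or.inr ⟨(i', j), rfl, hne⟩
          exact le_biSup m hmemb _ (hmem i' j)
      have heq : S ⁻¹' (Set.Ioi s) ∩ ⋂ i' ∈ insert i F, B i'
          = B i ∩ (S ⁻¹' (Set.Ioi s) ∩ ⋂ i' ∈ F, B i') := by
        rw [Finset.set_biInter_insert]
        rw [Set.inter_left_comm]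
      rw [heq]
      have hmul := hidep _ _ hMB hME
      simp only [Kernel.const_apply, MeasureTheory.ae_dirac_eq, Filter.eventually_pure] at hmul
      rw [hmul, ih, Finset.prod_insert hiF]
      ring
  have hfin : (⋂ i : Fin t, B i) = ⋂ i ∈ Finset.univ, B i := by simp
  calc Pr (S ⁻¹' (Set.Ioi s) ∩ ⋂ i : Fin t, B i)
      = Pr (S ⁻¹' (Set.Ioi s)) * ∏ i : Fin t, Pr (B i) := by
        rw [hfin, key Finset.univ]
    _ = ENNReal.ofReal e * ENNReal.ofReal (1 - (1 - e)^r) ^ t := by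
        rw [exp_tail_gt Pr hμ hSm hS hs]
        rw [Finset.prod_congr rfl (fun i _ => hBval i), Finset.prod_const, Finset.card_univ,
          Fintype.card_fin]
    _ = ENNReal.ofReal (e * (1 - (1 - e)^r)^t) := by
        rw [← ENNReal.ofReal_pow (by linarith), ← ENNReal.ofReal_mul he0.le]

end Aux

/-- **Expected download time for an (r,t)-availability code, low-traffic regime.**
With `S` and the `X i j` i.i.d. `Exp(μ)` and mutually independent, and
`T = min(S, max_j X 0 j, …, max_j X (t-1) j)`, one has `E[T] = (1/(μ r)) B(t+1, 1/r)`. -/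
theorem expected_download_time_availability_code
    {Ω : Type*} [MeasurableSpace Ω] (Pr : Measure Ω) [IsProbabilityMeasure Pr]
    (μ : ℝ) (hμ : 0 < μ) (r t : ℕ) (hr : 1 ≤ r)
    (S : Ω → ℝ) (X : Fin t → Fin r → Ω → ℝ)
    (hSm : Measurable S) (hXm : ∀ i j, Measurable (X i j))
    (hindep : iIndepFun
      (fun o : Option (Fin t × Fin r) => o.elim S (fun p => X p.1 p.2)) Pr)
    (hS : Pr.map S = expMeasure μ)
    (hX : ∀ i j, Pr.map (X i j) = expMeasure μ)
    (T : Ω → ℝ)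
    (hT : T = fun ω => ⨅ o : Option (Fin t), o.elim (S ω) (fun i => ⨆ j : Fin r, X i j ω)) :
    ∫ ω, T ω ∂Pr = 1 / (μ * r) * betaFn ((t : ℝ) + 1) (1 / r) := by
  haveI : Nonempty (Fin r) := ⟨⟨0, hr⟩⟩
  have hr0 : (0:ℝ) < r := by exact_mod_cast hr
  -- rewrite T with finite inf'/sup'
  have hT' : T = fun ω => Finset.univ.inf' Finset.univ_nonempty
      (fun o : Option (Fin t) => o.elim (S ω)
        (fun i => Finset.univ.sup' Finset.univ_nonempty (fun j => X i j ω))) := by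
    rw [hT]
    funext ω
    rw [← Finset.inf'_univ_eq_ciInf]
    congr 1
    funext o
    cases o with
    | none => rfl
    | some i => simp [← Finset.sup'_univ_eq_ciSup]
  have hTm : Measurable T := by
    rw [hT']
    apply meas_inf' (f := fun (o : Option (Fin t)) ω => o.elim (S ω)
      (fun i => Finset.univ.sup' Finset.univ_nonempty (fun j => X i j ω)))
    rintro (_ | i)
    · exact hSm
    · exact meas_sup' (fun j => X i j) (fun j => hXm i j) Finset.univ Finset.univ_nonempty
  -- tail sets
  have htail : ∀ s : ℝ, {ω | s < T ω}
      = S ⁻¹' (Set.Ioi s) ∩ ⋂ i : Fin t, ⋃ j : Fin r, X i j ⁻¹' (Set.Ioi s) := by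
    intro s
    ext ω
    rw [Set.mem_setOf_eq, hT', Finset.lt_inf'_iff]
    constructor
    · intro h
      refine ⟨h none (Finset.mem_univ _), Set.mem_iInter.mpr fun i => ?_⟩
      have h2 : s < Finset.univ.sup' Finset.univ_nonempty (fun j => X i j ω) :=
        h (some i) (Finset.mem_univ _)
      obtain ⟨j, -, hj⟩ := (Finset.lt_sup'_iff Finset.univ_nonempty).mp h2
      exact Set.mem_iUnion.mpr ⟨j, hj⟩
    · rintro ⟨h1, h2⟩ o _
      cases o with
      | none => exact h1
      | some i =>
        obtain ⟨j, hj⟩ := Set.mem_iUnion.mp (Set.mem_iInter.mp h2 i)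
        exact (Finset.lt_sup'_iff Finset.univ_nonempty).mpr ⟨j, Finset.mem_univ j, hj⟩
  -- nonnegativity
  have hTnn : 0 ≤ᵐ[Pr] T := by
    have hXae : ∀ᵐ ω ∂Pr, ∀ (i : Fin t) (j : Fin r), 0 ≤ X i j ω := by
      rw [ae_all_iff]
      intro i
      rw [ae_all_iff]
      intro j
      exact exp_ae_nonneg Pr (hXm i j) (hX i j)
    filter_upwards [exp_ae_nonneg Pr hSm hS, hXae] with ω hSω hXω
    rw [Pi.zero_apply, hT']
    apply Finset.le_inf'
    rintro (_ | i) -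
    · exact hSω
    · exact (Finset.le_sup'_iff Finset.univ_nonempty).mpr
        ⟨Classical.arbitrary (Fin r), Finset.mem_univ _, hXω i _⟩
  -- the tail density function
  set g : ℝ → ℝ := fun s => Real.exp (-(μ*s)) * (1 - (1 - Real.exp (-(μ*s)))^r)^t with hg
  have hgnn : ∀ s : ℝ, 0 < s → 0 ≤ g s := by
    intro s hs
    have h1 : Real.exp (-(μ*s)) ≤ 1 := by rw [Real.exp_le_one_iff]; nlinarith
    have h2 : (1 - Real.exp (-(μ*s)))^r ≤ 1 :=
      pow_le_one₀ (by linarith [Real.exp_pos (-(μ*s))]) (by linarith [Real.exp_pos (-(μ*s))])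
    have h3 := Real.exp_pos (-(μ*s))
    have h4 : (0:ℝ) ≤ 1 - (1 - Real.exp (-(μ*s)))^r := by linarith
    exact mul_nonneg h3.le (pow_nonneg h4 t)
  have hgexp : ∀ s : ℝ, g s = ∑ k ∈ Finset.range (t+1),
      ((-1:ℝ)^k * (t.choose k)) * (Real.exp (-(μ*s)) * (1 - Real.exp (-(μ*s)))^(r*k)) := by
    intro s
    rw [hg]
    simp only []
    rw [sub_eq_add_neg, add_comm, add_pow, Finset.mul_sum]
    refine Finset.sum_congr rfl fun k hk => ?_
    rw [pow_mul]
    ring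
  have hgint : IntegrableOn g (Set.Ioi (0:ℝ)) volume := by
    rw [funext hgexp]
    apply MeasureTheory.integrable_finset_sum
    intro k _
    exact (integrableOn_term μ hμ (r*k)).const_mul _
  -- value of the tail integral
  have hI : ∫ s in Set.Ioi (0:ℝ), g s
      = ∑ k ∈ Finset.range (t+1), (-1:ℝ)^k * (t.choose k) * (1/(μ*((r:ℝ)*k+1))) := by
    rw [funext hgexp]
    rw [MeasureTheory.integral_finset_sum _
      (fun k _ => (integrableOn_term μ hμ (r*k)).const_mul _)]
    refine Finset.sum_congr rfl fun k hk => ?_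
    rw [MeasureTheory.integral_const_mul, term_integral μ hμ (r*k)]
    push_cast
    ring
  have hInn : 0 ≤ ∫ s in Set.Ioi (0:ℝ), g s :=
    setIntegral_nonneg measurableSet_Ioi (fun s hs => hgnn s hs)
  -- layer cake
  have hlayer : ∫⁻ ω, ENNReal.ofReal (T ω) ∂Pr = ∫⁻ s in Set.Ioi (0:ℝ), Pr {ω | s < T ω} :=
    lintegral_eq_lintegral_meas_lt Pr hTnn hTm.aemeasurable
  have htails : ∫⁻ s in Set.Ioi (0:ℝ), Pr {ω | s < T ω}
      = ∫⁻ s in Set.Ioi (0:ℝ), ENNReal.ofReal (g s) := by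
    apply setLIntegral_congr_fun measurableSet_Ioi
    intro s hs
    beta_reduce
    rw [htail s, tail_prob Pr hμ r t S X hSm hXm hindep hS hX hs.le]
  have hofReal : ENNReal.ofReal (∫ s in Set.Ioi (0:ℝ), g s)
      = ∫⁻ s in Set.Ioi (0:ℝ), ENNReal.ofReal (g s) := by
    apply ofReal_integral_eq_lintegral_ofReal hgint
    filter_upwards [ae_restrict_mem measurableSet_Ioi] with s hs
    exact hgnn s hs
  rw [integral_eq_lintegral_of_nonneg_ae hTnn hTm.aestronglyMeasurable]
  rw [hlayer, htails, ← hofReal, ENNReal.toReal_ofReal hInn, hI]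
  rw [betaFn_nat_eval t (y := 1/(r:ℝ)) (by positivity), Finset.mul_sum]
  refine Finset.sum_congr rfl fun k hk => ?_
  have hk0 : (0:ℝ) < (k:ℝ) + 1/(r:ℝ) := by positivity
  have hd : (0:ℝ) < μ*((r:ℝ)*k+1) := by positivity
  field_simp
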